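/- arXiv:1811.12804 — 3 statements merged into one kernel-verified Lean document; each statement's English description precedes it below -/
import Mathlib

section
/- Let A be a diagonalizable real n×n matrix with eigen-decomposition A = V Λ V⁻¹ where V is invertible and Λ is diagonal. For any matrix H and any eigenvalue λ̃ of A + H, there exists an eigenvalue λ of A such that |λ - λ̃| ≤ ‖V‖ ‖V⁻¹‖ ‖H‖, where ‖·‖ denotes the operator (spectral) norm. -/
open Matrix

/-- Spectral (operator 2-) norm of a real square matrix. -/
noncomputable def spNormR {n : ℕ} (A : Matrix (Fin n) (Fin n) ℝ) : ℝ :=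
  ‖LinearMap.toContinuousLinearMap (Matrix.toEuclideanLin A)‖

/-- Spectral (operator 2-) norm of a complex square matrix. -/
noncomputable def spNormC {n : ℕ} (A : Matrix (Fin n) (Fin n) ℂ) : ℝ :=
  ‖LinearMap.toContinuousLinearMap (Matrix.toEuclideanLin A)‖

open scoped Matrix.Norms.L2Operator
set_option maxHeartbeats 1000000

lemma spNormC_eq {n : ℕ} (A : Matrix (Fin n) (Fin n) ℂ) : spNormC A = ‖A‖ := rfl
lemma spNormR_eq {n : ℕ} (A : Matrix (Fin n) (Fin n) ℝ) : spNormR A = ‖A‖ := rfl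

lemma normsq_eucl {n : ℕ} (𝕜 : Type*) [RCLike 𝕜] (v : Fin n → 𝕜) :
    ‖(WithLp.equiv 2 (Fin n → 𝕜)).symm v‖ ^ 2 = ∑ i, ‖v i‖ ^ 2 := by
  rw [EuclideanSpace.norm_eq, Real.sq_sqrt (by positivity)]
  rfl

lemma mulVec_sq_le {n : ℕ} (H : Matrix (Fin n) (Fin n) ℝ) (v : Fin n → ℝ) :
    ∑ i, ((H *ᵥ v) i) ^ 2 ≤ ‖H‖ ^ 2 * ∑ i, (v i) ^ 2 := by
  have h1 : ‖(WithLp.equiv 2 (Fin n → ℝ)).symm (H *ᵥ v)‖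
      ≤ ‖H‖ * ‖(WithLp.equiv 2 (Fin n → ℝ)).symm v‖ := H.l2_opNorm_mulVec _
  have h2 := pow_le_pow_left₀ (norm_nonneg _) h1 2
  rw [normsq_eucl, mul_pow, normsq_eucl] at h2
  simpa [Real.norm_eq_abs, sq_abs] using h2

lemma mapC_norm_le {n : ℕ} (H : Matrix (Fin n) (Fin n) ℝ) :
    ‖H.map (algebraMap ℝ ℂ)‖ ≤ ‖H‖ := by
  rw [Matrix.l2_opNorm_def]
  apply ContinuousLinearMap.opNorm_le_bound _ (norm_nonneg _)
  intro x
  have hx : ((toEuclideanLin ≪≫ₗ LinearMap.toContinuousLinearMap) (H.map (algebraMap ℝ ℂ))) x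
      = (WithLp.equiv 2 (Fin n → ℂ)).symm ((H.map (algebraMap ℝ ℂ)) *ᵥ (WithLp.equiv 2 _ x)) := rfl
  rw [hx]
  set xv : Fin n → ℂ := WithLp.equiv 2 (Fin n → ℂ) x with hxv
  set xr : Fin n → ℝ := fun i => (xv i).re
  set xi : Fin n → ℝ := fun i => (xv i).im
  have hre : ∀ i, ((H.map (algebraMap ℝ ℂ)) *ᵥ xv) i = Complex.mk ((H *ᵥ xr) i) ((H *ᵥ xi) i) := by
    intro i
    apply Complex.ext <;>
      simp [Matrix.mulVec, dotProduct, Complex.re_sum, Complex.im_sum, Matrix.map_apply,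
        Finset.mul_sum, xr, xi]
  have hxnorm : ‖x‖ ^ 2 = (∑ i, (xr i) ^ 2) + ∑ i, (xi i) ^ 2 := by
    have : x = (WithLp.equiv 2 (Fin n → ℂ)).symm xv := rfl
    rw [this, normsq_eucl, ← Finset.sum_add_distrib]
    refine Finset.sum_congr rfl fun i _ => ?_
    rw [Complex.sq_norm, Complex.normSq_apply]
    simp [xr, xi, sq]
  have key : ‖(WithLp.equiv 2 (Fin n → ℂ)).symm ((H.map (algebraMap ℝ ℂ)) *ᵥ xv)‖ ^ 2
      ≤ (‖H‖ * ‖x‖) ^ 2 := by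
    rw [normsq_eucl]
    have expand : ∑ i, ‖((H.map (algebraMap ℝ ℂ)) *ᵥ xv) i‖ ^ 2
        = (∑ i, ((H *ᵥ xr) i) ^ 2) + (∑ i, ((H *ᵥ xi) i) ^ 2) := by
      rw [← Finset.sum_add_distrib]
      refine Finset.sum_congr rfl fun i _ => ?_
      rw [hre i, Complex.sq_norm, Complex.normSq_mk]
      ring
    rw [expand, mul_pow, hxnorm, mul_add]
    exact add_le_add (mulVec_sq_le H xr) (mulVec_sq_le H xi)
  exact le_of_pow_le_pow_left₀ (two_ne_zero) (by positivity) key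

lemma diag_mem_spectrum {n : ℕ} (d : Fin n → ℂ) (i : Fin n) :
    d i ∈ spectrum ℂ (Matrix.diagonal d) := by
  rw [spectrum.mem_iff]
  intro h
  rw [Matrix.isUnit_iff_isUnit_det, isUnit_iff_ne_zero] at h
  apply h
  have : algebraMap ℂ (Matrix (Fin n) (Fin n) ℂ) (d i) - diagonal d
      = diagonal (fun j => d i - d j) := by
    ext j k; by_cases hjk : j = k <;> simp [Matrix.algebraMap_eq_diagonal, hjk, Matrix.diagonal]
  rw [this, det_diagonal]
  exact Finset.prod_eq_zero (Finset.mem_univ i) (by simp)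

lemma exists_eigenvector {n : ℕ} (M : Matrix (Fin n) (Fin n) ℂ) (μ : ℂ)
    (h : μ ∈ spectrum ℂ M) : ∃ x : Fin n → ℂ, x ≠ 0 ∧ M *ᵥ x = μ • x := by
  rw [spectrum.mem_iff, Matrix.isUnit_iff_isUnit_det, isUnit_iff_ne_zero, not_not] at h
  obtain ⟨v, hv, hMv⟩ := (Matrix.exists_mulVec_eq_zero_iff).mpr h
  refine ⟨v, hv, ?_⟩
  have hall := congrFun hMv
  have h2 : ∀ i, ((algebraMap ℂ (Matrix (Fin n) (Fin n) ℂ) μ - M) *ᵥ v) i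
      = μ * v i - (M *ᵥ v) i := by
    intro i
    simp [Matrix.sub_mulVec, Matrix.algebraMap_eq_diagonal, Matrix.mulVec_diagonal]
  funext i
  have := h2 i ▸ hall i
  simp only [Pi.zero_apply] at this
  rw [sub_eq_zero] at this
  simpa using this.symm

/-- **Bauer–Fike theorem.** If `A` is diagonalizable, `A = V Λ V⁻¹` with `V`
invertible and `Λ` diagonal, then every eigenvalue `λ̃` of `A + H` is within
`‖V‖ ‖V⁻¹‖ ‖H‖` of some eigenvalue `λ` of `A`. -/
theorem bauer_fike {n : ℕ} (A H : Matrix (Fin n) (Fin n) ℝ)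
    (V : Matrix (Fin n) (Fin n) ℂ) (Λ : Matrix (Fin n) (Fin n) ℂ)
    (hV : IsUnit V) (hΛ : Λ.IsDiag)
    (hdiag : A.map (algebraMap ℝ ℂ) = V * Λ * V⁻¹)
    (lam' : ℂ) (hlam' : lam' ∈ spectrum ℂ ((A + H).map (algebraMap ℝ ℂ))) :
    ∃ lam ∈ spectrum ℂ (A.map (algebraMap ℝ ℂ)),
      ‖lam - lam'‖ ≤ spNormC V * spNormC V⁻¹ * spNormR H := by
  classical
  set d : Fin n → ℂ := Λ.diag with hd
  have hΛdiag : Λ = Matrix.diagonal d := (hΛ.diagonal_diag).symm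
  -- spectrum of A equals spectrum of Λ
  have hVdet : IsUnit V.det := (Matrix.isUnit_iff_isUnit_det V).mp hV
  have hVinv : (hV.unit)⁻¹ = (V⁻¹ : Matrix (Fin n) (Fin n) ℂ) := by
    rw [Matrix.coe_units_inv, hV.unit_spec]
  have hspec : spectrum ℂ (A.map (algebraMap ℝ ℂ)) = spectrum ℂ Λ := by
    rw [hdiag]
    have : V * Λ * V⁻¹ = (hV.unit : Matrix (Fin n) (Fin n) ℂ) * Λ *
        ((hV.unit⁻¹ : (Matrix (Fin n) (Fin n) ℂ)ˣ) : Matrix (Fin n) (Fin n) ℂ) := by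
      rw [hVinv, hV.unit_spec]
    rw [this, spectrum.units_conjugate]
  -- eigenvalues of A:
  have hmem : ∀ i, d i ∈ spectrum ℂ (A.map (algebraMap ℝ ℂ)) := by
    intro i
    rw [hspec, hΛdiag]
    exact diag_mem_spectrum d i
  -- eigenvector of A + H
  obtain ⟨x, hx0, hxe⟩ := exists_eigenvector _ lam' hlam'
  have hne : Nonempty (Fin n) := by
    rcases Nat.eq_zero_or_pos n with h | h
    · subst h
      exact absurd (Subsingleton.elim x 0) hx0
    · exact ⟨⟨0, h⟩⟩
  -- pick minimizing index
  obtain ⟨i₀, -, hmin⟩ := Finset.exists_min_image Finset.univ (fun i => ‖d i - lam'‖)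
    ⟨hne.some, Finset.mem_univ _⟩
  refine ⟨d i₀, hmem i₀, ?_⟩
  set μ : ℝ := ‖d i₀ - lam'‖ with hμ
  -- the vector argument
  set y : Fin n → ℂ := V⁻¹ *ᵥ x with hy
  have hVy : V *ᵥ y = x := by
    rw [hy, Matrix.mulVec_mulVec, Matrix.mul_nonsing_inv V hVdet, Matrix.one_mulVec]
  have hy0 : y ≠ 0 := by
    intro h
    apply hx0
    rw [← hVy, h, Matrix.mulVec_zero]
  -- the eigen equation after conjugation
  have hmap : (A + H).map (algebraMap ℝ ℂ) = A.map (algebraMap ℝ ℂ) + H.map (algebraMap ℝ ℂ) := by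
    ext i j; simp [Matrix.map_apply, map_add]
  set Hm : Matrix (Fin n) (Fin n) ℂ := H.map (algebraMap ℝ ℂ) with hHm
  set w : Fin n → ℂ := (V⁻¹ * Hm * V) *ᵥ y with hw
  have heq : Λ *ᵥ y + w = lam' • y := by
    have e1 : (A.map (algebraMap ℝ ℂ)) *ᵥ x + Hm *ᵥ x = lam' • x := by
      rw [← Matrix.add_mulVec, ← hmap]
      exact hxe
    have e2 := congrArg (fun v => V⁻¹ *ᵥ v) e1
    simp only [Matrix.mulVec_add, Matrix.mulVec_smul, Matrix.mulVec_mulVec] at e2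
    rw [hdiag] at e2
    have e3 : V⁻¹ * (V * Λ * V⁻¹) = Λ * V⁻¹ := by
      rw [Matrix.mul_assoc V Λ V⁻¹, ← Matrix.mul_assoc,
        Matrix.nonsing_inv_mul V hVdet, Matrix.one_mul]
    rw [e3] at e2
    have e4 : (Λ * V⁻¹) *ᵥ x = Λ *ᵥ y := by rw [← Matrix.mulVec_mulVec, ← hy]
    have e5 : (V⁻¹ * Hm) *ᵥ x = w := by
      rw [hw, ← hVy, Matrix.mulVec_mulVec, Matrix.mulVec_mulVec, Matrix.mul_assoc]
    rw [e4, e5] at e2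
    exact e2
  have hwi : ∀ i, w i = (lam' - d i) * y i := by
    intro i
    have := congrFun heq i
    simp only [Pi.add_apply, Pi.smul_apply, smul_eq_mul] at this
    have hΛy : (Λ *ᵥ y) i = d i * y i := by
      rw [hΛdiag, Matrix.mulVec_diagonal]
    rw [hΛy] at this
    linear_combination this
  -- norm estimate:  μ * ‖y‖ ≤ ‖w‖ ≤ ‖V⁻¹‖‖Hm‖‖V‖‖y‖
  set yE : EuclideanSpace ℂ (Fin n) := (WithLp.equiv 2 (Fin n → ℂ)).symm y with hyE
  set wE : EuclideanSpace ℂ (Fin n) := (WithLp.equiv 2 (Fin n → ℂ)).symm w with hwE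
  have hyEnorm : 0 < ‖yE‖ := by
    rw [norm_pos_iff]
    intro h
    exact hy0 (by simpa [hyE] using congrArg (WithLp.equiv 2 (Fin n → ℂ)) h)
  have hlow : μ * ‖yE‖ ≤ ‖wE‖ := by
    have hsq : (μ * ‖yE‖) ^ 2 ≤ ‖wE‖ ^ 2 := by
      rw [mul_pow, hwE, hyE, normsq_eucl, normsq_eucl, Finset.mul_sum]
      refine Finset.sum_le_sum fun i _ => ?_
      rw [hwi i, norm_mul, mul_pow]
      have h1 : μ ≤ ‖lam' - d i‖ := by
        rw [norm_sub_rev]; exact hmin i (Finset.mem_univ i)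
      have := pow_le_pow_left₀ (norm_nonneg _) h1 2
      exact mul_le_mul_of_nonneg_right this (by positivity)
    exact le_of_pow_le_pow_left₀ two_ne_zero (norm_nonneg _) hsq
  have hup : ‖wE‖ ≤ ‖V⁻¹‖ * ‖Hm‖ * ‖V‖ * ‖yE‖ := by
    have h1 : ‖wE‖ ≤ ‖V⁻¹ * Hm * V‖ * ‖yE‖ := (V⁻¹ * Hm * V).l2_opNorm_mulVec yE
    refine h1.trans ?_
    have h2 : ‖V⁻¹ * Hm * V‖ ≤ ‖V⁻¹‖ * ‖Hm‖ * ‖V‖ := by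
      calc ‖V⁻¹ * Hm * V‖ ≤ ‖V⁻¹ * Hm‖ * ‖V‖ := Matrix.l2_opNorm_mul _ _
        _ ≤ ‖V⁻¹‖ * ‖Hm‖ * ‖V‖ :=
          mul_le_mul_of_nonneg_right (Matrix.l2_opNorm_mul _ _) (norm_nonneg _)
    exact mul_le_mul_of_nonneg_right h2 (le_of_lt hyEnorm)
  have final : μ ≤ ‖V⁻¹‖ * ‖Hm‖ * ‖V‖ := by
    have := hlow.trans hup
    exact le_of_mul_le_mul_right (by linarith [this]) hyEnorm
  rw [spNormC_eq, spNormC_eq, spNormR_eq]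
  calc μ ≤ ‖V⁻¹‖ * ‖Hm‖ * ‖V‖ := final
    _ ≤ ‖V⁻¹‖ * ‖H‖ * ‖V‖ := by
        apply mul_le_mul_of_nonneg_right _ (norm_nonneg _)
        exact mul_le_mul_of_nonneg_left (mapC_norm_le H) (norm_nonneg _)
    _ = ‖V‖ * ‖V⁻¹‖ * ‖H‖ := by ring
end

section
/- If A is a symmetric real n×n matrix and H is any real n×n matrix, then for any eigenvalue λ̃ of A + H there exists an eigenvalue λ of A such that |λ - λ̃| ≤ ‖H‖, where ‖·‖ is the spectral norm. -/
open Matrix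

lemma keyR {n : ℕ} (H : Matrix (Fin n) (Fin n) ℝ) (p : EuclideanSpace ℝ (Fin n)) :
    ‖Matrix.toEuclideanLin H p‖ ≤ spNormR H * ‖p‖ := by
  have := (LinearMap.toContinuousLinearMap (Matrix.toEuclideanLin H)).le_opNorm p
  rwa [LinearMap.coe_toContinuousLinearMap'] at this

lemma keyC {n : ℕ} (H : Matrix (Fin n) (Fin n) ℝ) (x : EuclideanSpace ℂ (Fin n)) :
    ‖Matrix.toEuclideanLin (H.map (algebraMap ℝ ℂ)) x‖ ≤ spNormR H * ‖x‖ := by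
  set Hc := H.map (algebraMap ℝ ℂ) with hHc
  set p : EuclideanSpace ℝ (Fin n) := (WithLp.equiv 2 _).symm (fun i => (x i).re) with hp
  set q : EuclideanSpace ℝ (Fin n) := (WithLp.equiv 2 _).symm (fun i => (x i).im) with hq
  have hre : ∀ i, ((Hc *ᵥ (WithLp.equiv 2 _ x)) i).re = (toEuclideanLin H p) i := by
    intro i
    simp [Hc, Matrix.mulVec, dotProduct, Complex.re_sum, toEuclideanLin_apply, p,
      Matrix.map_apply]
  have him : ∀ i, ((Hc *ᵥ (WithLp.equiv 2 _ x)) i).im = (toEuclideanLin H q) i := by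
    intro i
    simp [Hc, Matrix.mulVec, dotProduct, Complex.im_sum, toEuclideanLin_apply, q,
      Matrix.map_apply]
  have hsq : ‖toEuclideanLin Hc x‖ ^ 2 = ‖toEuclideanLin H p‖ ^ 2 + ‖toEuclideanLin H q‖ ^ 2 := by
    rw [PiLp.norm_sq_eq_of_L2, PiLp.norm_sq_eq_of_L2, PiLp.norm_sq_eq_of_L2,
      ← Finset.sum_add_distrib]
    refine Finset.sum_congr rfl fun i _ => ?_
    have : (toEuclideanLin Hc x) i = (Hc *ᵥ (WithLp.equiv 2 _ x)) i := rfl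
    rw [this, Complex.sq_norm, Complex.normSq_apply, hre i, him i]
    simp [Real.norm_eq_abs, sq_abs]
    ring
  have hxsq : ‖x‖ ^ 2 = ‖p‖ ^ 2 + ‖q‖ ^ 2 := by
    rw [PiLp.norm_sq_eq_of_L2, PiLp.norm_sq_eq_of_L2, PiLp.norm_sq_eq_of_L2,
      ← Finset.sum_add_distrib]
    refine Finset.sum_congr rfl fun i _ => ?_
    rw [Complex.sq_norm, Complex.normSq_apply]
    simp [p, q, Real.norm_eq_abs, sq_abs]
    ring
  have hC : 0 ≤ spNormR H := norm_nonneg _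
  have h2 : ‖toEuclideanLin Hc x‖ ^ 2 ≤ (spNormR H * ‖x‖) ^ 2 := by
    rw [hsq, mul_pow, hxsq, mul_add]
    gcongr <;> [skip; skip] <;>
      · rw [← mul_pow]
        exact pow_le_pow_left₀ (norm_nonneg _) (by exact keyR H _) 2
  exact le_of_pow_le_pow_left₀ two_ne_zero (by positivity) h2

/-- **Bauer–Fike theorem, symmetric case.** If `A` is a real symmetric matrix and
`H` is any real matrix, then every eigenvalue `λ̃` of `A + H` is within `‖H‖`
of some eigenvalue `λ` of `A`. -/
theorem bauer_fike_symmetric {n : ℕ} (A H : Matrix (Fin n) (Fin n) ℝ)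
    (hA : A.IsSymm)
    (lam' : ℂ) (hlam' : lam' ∈ spectrum ℂ ((A + H).map (algebraMap ℝ ℂ))) :
    ∃ lam ∈ spectrum ℂ (A.map (algebraMap ℝ ℂ)), ‖lam - lam'‖ ≤ spNormR H := by
  set Ac := A.map (algebraMap ℝ ℂ) with hAcdef
  set Hc := H.map (algebraMap ℝ ℂ) with hHcdef
  have hmap : (A + H).map (algebraMap ℝ ℂ) = Ac + Hc := by
    ext i j; simp [Ac, Hc, Matrix.map_apply]
  rw [hmap] at hlam'
  have hAc : Ac.IsHermitian := by
    ext i j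
    simp only [conjTranspose_apply, Ac, Matrix.map_apply, Complex.coe_algebraMap,
      Complex.star_def, Complex.conj_ofReal]
    exact congrArg _ (hA.apply i j)
  -- extract an eigenvector
  rw [spectrum.mem_iff] at hlam'
  rw [Matrix.isUnit_iff_isUnit_det, isUnit_iff_ne_zero, not_ne_iff] at hlam'
  obtain ⟨v, hvne, hveq⟩ := Matrix.exists_mulVec_eq_zero_iff.2 hlam'
  have hv : Ac *ᵥ v + Hc *ᵥ v = lam' • v := by
    have h1 : (algebraMap ℂ (Matrix (Fin n) (Fin n) ℂ)) lam' *ᵥ v = lam' • v := by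
      rw [Algebra.algebraMap_eq_smul_one, smul_mulVec, one_mulVec]
    rw [sub_mulVec, h1, add_mulVec, sub_eq_zero] at hveq
    exact hveq.symm
  have hn : Nonempty (Fin n) := by
    by_contra h
    exact hvne (funext fun i => absurd ⟨i⟩ h)
  set b := hAc.eigenvectorBasis with hb
  set μ := hAc.eigenvalues with hμ
  obtain ⟨i₀, -, hmin⟩ := Finset.exists_min_image Finset.univ
    (fun i => ‖(μ i : ℂ) - lam'‖) Finset.univ_nonempty
  refine ⟨(μ i₀ : ℂ), ?_, ?_⟩
  · simpa using spectrum.algebraMap_mem ℂ (hAc.eigenvalues_mem_spectrum_real i₀)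
  -- the estimate
  set V : EuclideanSpace ℂ (Fin n) := (WithLp.equiv 2 _).symm v with hV
  set T := Matrix.toEuclideanLin Ac with hT
  have hsymmT : T.IsSymmetric := Matrix.isHermitian_iff_isSymmetric.1 hAc
  have hTb : ∀ j, T (b j) = (μ j : ℂ) • (b j) := by
    intro j
    rw [hT, toEuclideanLin_apply, hAc.mulVec_eigenvectorBasis]
    rw [WithLp.toLp_smul, WithLp.toLp_ofLp]
    exact RCLike.real_smul_eq_coe_smul (K := ℂ) _ _
  have hreprT : ∀ i, b.repr (T V) i = (μ i : ℂ) * b.repr V i := by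
    intro i
    rw [OrthonormalBasis.repr_apply_apply, OrthonormalBasis.repr_apply_apply,
      ← hsymmT (b i) V, hTb i, inner_smul_left]
    simp
  set c := b.repr V with hc
  set d := ‖(μ i₀ : ℂ) - lam'‖ with hd
  have hW : T V - lam' • V = -(Matrix.toEuclideanLin Hc V) := by
    have h2 : Ac *ᵥ v - lam' • v = -(Hc *ᵥ v) := by rw [← hv]; abel
    have h3 : T V = (WithLp.equiv 2 _).symm (Ac *ᵥ v) := by
      rw [hT, toEuclideanLin_apply]; rfl
    have h4 : Matrix.toEuclideanLin Hc V = (WithLp.equiv 2 _).symm (Hc *ᵥ v) := by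
      rw [toEuclideanLin_apply]; rfl
    rw [h3, h4]
    ext i
    have h6 := congrFun h2 i
    simpa [hV] using h6
  have hnormW : d * ‖V‖ ≤ ‖T V - lam' • V‖ := by
    have e1 : ‖T V - lam' • V‖ ^ 2 = ∑ i, ‖((μ i : ℂ) - lam') * c i‖ ^ 2 := by
      rw [← b.repr.norm_map (T V - lam' • V), PiLp.norm_sq_eq_of_L2]
      refine Finset.sum_congr rfl fun i _ => ?_
      congr 1
      rw [map_sub, _root_.map_smul]
      show ‖b.repr (T V) i - (lam' • b.repr V) i‖ = _
      have h5 : (lam' • b.repr V) i = lam' * c i := rfl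
      rw [hreprT i, h5]
      congr 1
      ring
    have e2 : (d * ‖V‖) ^ 2 ≤ ‖T V - lam' • V‖ ^ 2 := by
      rw [e1, mul_pow, ← b.repr.norm_map V, PiLp.norm_sq_eq_of_L2, Finset.mul_sum]
      refine Finset.sum_le_sum fun i _ => ?_
      rw [norm_mul, mul_pow]
      have := hmin i (Finset.mem_univ i)
      have hd0 : 0 ≤ d := norm_nonneg _
      exact mul_le_mul_of_nonneg_right (pow_le_pow_left₀ hd0 this 2) (by positivity)
    exact le_of_pow_le_pow_left₀ two_ne_zero (norm_nonneg _) e2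
  have hVpos : 0 < ‖V‖ := by
    rw [norm_pos_iff]
    intro h
    apply hvne
    have := congrArg (WithLp.equiv 2 (Fin n → ℂ)) h
    rwa [Equiv.apply_symm_apply] at this
  have hfinal : d * ‖V‖ ≤ spNormR H * ‖V‖ := by
    calc d * ‖V‖ ≤ ‖T V - lam' • V‖ := hnormW
      _ = ‖Matrix.toEuclideanLin Hc V‖ := by rw [hW, norm_neg]
      _ ≤ spNormR H * ‖V‖ := keyC H V
  exact le_of_mul_le_mul_right hfinal hVpos
end

section
/- Let M⋆ = u⋆ u⋆ᵀ be a rank-1 real symmetric n×n matrix with ‖u⋆‖₂ = 1, and let H be a real n×n matrix with ‖H‖ ≤ 1/4. Let (λ, u) be the leading eigenpair of M = M⋆ + H with λ real, λ ≥ 3/4, and ‖u‖₂ = 1. Then ‖u − ((u⋆ᵀu)/λ) u⋆‖₂ ≤ ‖H‖ / (λ(λ − ‖H‖)) ≤ (8/3)‖H‖. -/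
open Matrix

/-- Euclidean (ℓ₂) norm of a real vector. -/
noncomputable def l2norm {n : ℕ} (x : Fin n → ℝ) : ℝ :=
  Real.sqrt (∑ i, x i ^ 2)

lemma l2norm_eq {n : ℕ} (x : Fin n → ℝ) :
    l2norm x = ‖(WithLp.equiv 2 (Fin n → ℝ)).symm x‖ := by
  rw [EuclideanSpace.norm_eq, l2norm]
  congr 1
  refine Finset.sum_congr rfl fun i _ => ?_
  simp [sq_abs]

lemma mulVec_l2norm_le {n : ℕ} (A : Matrix (Fin n) (Fin n) ℝ) (x : Fin n → ℝ) :
    l2norm (A.mulVec x) ≤ spNormR A * l2norm x := by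
  rw [l2norm_eq, l2norm_eq]
  exact (LinearMap.toContinuousLinearMap (Matrix.toEuclideanLin A)).le_opNorm ((WithLp.equiv 2 (Fin n → ℝ)).symm x)

lemma abs_dot_le {n : ℕ} (x y : Fin n → ℝ) :
    |x ⬝ᵥ y| ≤ l2norm x * l2norm y := by
  rw [l2norm_eq, l2norm_eq]
  have h : x ⬝ᵥ y = inner ℝ ((WithLp.equiv 2 (Fin n → ℝ)).symm x)
      ((WithLp.equiv 2 (Fin n → ℝ)).symm y) := by
    simp [dotProduct, PiLp.inner_apply, RCLike.inner_apply, mul_comm]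
  rw [h]
  exact abs_real_inner_le_norm _ _

lemma spNormR_nonneg {n : ℕ} (A : Matrix (Fin n) (Fin n) ℝ) : 0 ≤ spNormR A :=
  norm_nonneg _

lemma l2norm_smul {n : ℕ} (c : ℝ) (x : Fin n → ℝ) :
    l2norm (c • x) = |c| * l2norm x := by
  rw [l2norm_eq, l2norm_eq, ← Real.norm_eq_abs]
  have : (WithLp.equiv 2 (Fin n → ℝ)).symm (c • x)
      = c • (WithLp.equiv 2 (Fin n → ℝ)).symm x := rfl
  rw [this, norm_smul]

/-- Rank-1 ℓ₂ eigenvector perturbation: if `M = u⋆u⋆ᵀ + H` with `‖H‖ ≤ 1/4` and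
`(λ, u)` is the leading eigenpair with `λ ≥ 3/4` and `‖u‖₂ = 1`, then
`‖u − ((u⋆ᵀu)/λ) u⋆‖₂ ≤ ‖H‖/(λ(λ−‖H‖)) ≤ (8/3)‖H‖`. -/
theorem rank_one_l2_perturbation {n : ℕ} (ustar : Fin n → ℝ)
    (hustar : l2norm ustar = 1)
    (H : Matrix (Fin n) (Fin n) ℝ) (hH : spNormR H ≤ 1 / 4)
    (M : Matrix (Fin n) (Fin n) ℝ) (hM : M = Matrix.vecMulVec ustar ustar + H)
    (lam : ℝ) (u : Fin n → ℝ) (hu : l2norm u = 1)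
    (heig : M.mulVec u = lam • u) (hlam : 3 / 4 ≤ lam) :
    l2norm (u - ((ustar ⬝ᵥ u) / lam) • ustar) ≤ spNormR H / (lam * (lam - spNormR H)) ∧
    spNormR H / (lam * (lam - spNormR H)) ≤ (8 / 3) * spNormR H := by
  have hlam0 : (0:ℝ) < lam := lt_of_lt_of_le (by norm_num) hlam
  have hH0 : 0 ≤ spNormR H := spNormR_nonneg H
  -- eigen-equation rewritten
  have hkey : (ustar ⬝ᵥ u) • ustar + H.mulVec u = lam • u := by
    have : (Matrix.vecMulVec ustar ustar).mulVec u = (ustar ⬝ᵥ u) • ustar := by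
      funext i
      simp only [Matrix.vecMulVec, Matrix.mulVec, dotProduct, Matrix.of_apply,
        Pi.smul_apply, smul_eq_mul, Finset.sum_mul]
      exact Finset.sum_congr rfl fun j _ => by ring
    rw [hM, Matrix.add_mulVec, this] at heig
    exact heig
  have hdiff : u - ((ustar ⬝ᵥ u) / lam) • ustar = (1 / lam) • H.mulVec u := by
    have hHu' : H.mulVec u = lam • u - (ustar ⬝ᵥ u) • ustar := by
      rw [← hkey]; abel
    rw [hHu', smul_sub, smul_smul, smul_smul, one_div, inv_mul_cancel₀ (ne_of_gt hlam0),
      one_smul, inv_mul_eq_div]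
  -- ‖u star ⬝ u‖ ≤ 1
  have hd1 : |ustar ⬝ᵥ u| ≤ 1 := by
    have := abs_dot_le ustar u
    rwa [hustar, hu, one_mul] at this
  have hHu : l2norm (H.mulVec u) ≤ spNormR H := by
    have := mulVec_l2norm_le H u
    rwa [hu, mul_one] at this
  -- λ ≤ 1 + ‖H‖
  have hlamle : lam ≤ 1 + spNormR H := by
    have h1 : l2norm (lam • u) = lam := by
      rw [l2norm_smul, hu, mul_one, abs_of_pos hlam0]
    have h2 : l2norm (lam • u) ≤ |ustar ⬝ᵥ u| * l2norm ustar + l2norm (H.mulVec u) := by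
      rw [← hkey]
      calc l2norm ((ustar ⬝ᵥ u) • ustar + H.mulVec u)
          ≤ l2norm ((ustar ⬝ᵥ u) • ustar) + l2norm (H.mulVec u) := by
            rw [l2norm_eq, l2norm_eq, l2norm_eq, WithLp.equiv_symm_apply, WithLp.toLp_add]
            exact norm_add_le _ _
        _ = |ustar ⬝ᵥ u| * l2norm ustar + l2norm (H.mulVec u) := by rw [l2norm_smul]
    rw [h1, hustar, mul_one] at h2
    linarith
  have hnorm : l2norm (u - ((ustar ⬝ᵥ u) / lam) • ustar) ≤ spNormR H / lam := by
    rw [hdiff, l2norm_smul, abs_of_pos (by positivity : (0:ℝ) < 1/lam)]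
    calc (1/lam) * l2norm (H.mulVec u) ≤ (1/lam) * spNormR H := by
          exact mul_le_mul_of_nonneg_left hHu (by positivity)
      _ = spNormR H / lam := by ring
  constructor
  · refine hnorm.trans ?_
    rw [div_le_div_iff₀ hlam0 (by nlinarith : (0:ℝ) < lam * (lam - spNormR H))]
    have h1 : lam - spNormR H ≤ 1 := by linarith
    nlinarith [mul_nonneg (mul_nonneg hH0 hlam0.le) (by linarith : (0:ℝ) ≤ 1 - (lam - spNormR H))]
  · rw [div_le_iff₀ (by nlinarith : (0:ℝ) < lam * (lam - spNormR H))]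
    have h38 : (3:ℝ)/8 ≤ lam * (lam - spNormR H) := by nlinarith
    nlinarith [mul_le_mul_of_nonneg_left h38 hH0]
end
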